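/- Let N be a positive integer and let w ∈ ℝ^{2N+1} have entries w_k = min(k+1, 2N+1−k) for k = 0, …, 2N. Then the maximum of the windowed sums Σ_{k=i}^{i+N} w_k^{-2} over 0 ≤ i ≤ N is attained at i = 0 (and at i = N), and its value is C_w = Σ_{j=1}^{N+1} 1/j². In particular, C_w < π²/6. -/

import Mathlib

open Finset

/-- The weights `w_k = min(k+1, 2N+1-k)`, i.e. `w = (1,2,…,N+1,N,…,2,1)`. -/
noncomputable def wt (N k : ℕ) : ℝ :=
  min ((k : ℝ) + 1) (2 * (N : ℝ) + 1 - (k : ℝ))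

/-- `C_w = max_{0 ≤ i ≤ N} ∑_{k=i}^{i+N} w_k⁻²`. -/
noncomputable def Cw (N : ℕ) : ℝ :=
  (Finset.range (N + 1)).sup' Finset.nonempty_range_add_one
    fun i => ∑ k ∈ Finset.Icc i (i + N), ((wt N k)⁻¹) ^ 2

lemma wt_left {N k : ℕ} (hk : k ≤ N) : wt N k = (k : ℝ) + 1 := by
  have : (k : ℝ) ≤ N := by exact_mod_cast hk
  unfold wt; rw [min_eq_left]; linarith

lemma wt_right {N k : ℕ} (hk : N ≤ k) : wt N k = 2 * (N : ℝ) + 1 - k := by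
  have : (N : ℝ) ≤ k := by exact_mod_cast hk
  unfold wt; rw [min_eq_right]; linarith

lemma window_eq (N i : ℕ) :
    ∑ k ∈ Finset.Icc i (i + N), ((wt N k)⁻¹) ^ 2
      = ∑ k ∈ Finset.range (N + 1), ((wt N (i + k))⁻¹) ^ 2 := by
  rw [← Finset.Ico_add_one_right_eq_Icc, Finset.sum_Ico_eq_sum_range]
  have h : i + N + 1 - i = N + 1 := by omega
  rw [h]

lemma window_le (N : ℕ) {i : ℕ} (hi : i ≤ N) :
    ∑ k ∈ Finset.Icc i (i + N), ((wt N k)⁻¹) ^ 2 ≤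
      ∑ k ∈ Finset.Icc 0 (0 + N), ((wt N k)⁻¹) ^ 2 := by
  rw [window_eq, window_eq]
  simp only [Nat.zero_add]
  set f : ℕ → ℝ := fun k => ((wt N k)⁻¹) ^ 2 with hf
  have h1 : N + 1 = (N + 1 - i) + i := by omega
  have h2 : N + 1 = i + (N + 1 - i) := by omega
  have key : ∑ k ∈ Finset.range i, f (N + 1 + k) ≤ ∑ k ∈ Finset.range i, f k := by
    rw [← Finset.sum_range_reflect (fun k => f (N + 1 + k)) i]
    refine Finset.sum_le_sum fun k hk => ?_
    rw [Finset.mem_range] at hk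
    have e1 : N + 1 + (i - 1 - k) = N + i - k := by omega
    simp only [e1, hf]
    have hw1 : wt N (N + i - k) = (N : ℝ) + 1 - i + k := by
      rw [wt_right (by omega), Nat.cast_sub (by omega)]
      push_cast
      ring
    have hw2 : wt N k = (k : ℝ) + 1 := wt_left (by omega)
    rw [hw1, hw2]
    have hiN : (i : ℝ) ≤ N := by exact_mod_cast hi
    have h0 : (0 : ℝ) < (k : ℝ) + 1 := by positivity
    have hle : (k : ℝ) + 1 ≤ (N : ℝ) + 1 - i + k := by linarith
    exact pow_le_pow_left₀ (inv_nonneg.2 (by linarith)) (inv_anti₀ h0 hle) 2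
  have A := Finset.sum_range_add (fun k => f (i + k)) (N + 1 - i) i
  rw [show N + 1 - i + i = N + 1 from by omega] at A
  have B := Finset.sum_range_add f i (N + 1 - i)
  rw [show i + (N + 1 - i) = N + 1 from by omega] at B
  rw [A, B, add_comm (∑ k ∈ Finset.range i, f k)]
  refine (add_le_add_iff_left _).2 ?_
  calc ∑ k ∈ Finset.range i, f (i + (N + 1 - i + k))
      = ∑ k ∈ Finset.range i, f (N + 1 + k) := by
        refine Finset.sum_congr rfl fun k _ => ?_
        congr 1; omega
    _ ≤ ∑ k ∈ Finset.range i, f k := key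

/-- the maximum of the windowed sums `∑_{k=i}^{i+N} w_k⁻²` over
`0 ≤ i ≤ N` is attained at `i = 0` (and at `i = N`), its value is
`C_w = ∑_{j=1}^{N+1} 1/j²`, and in particular `C_w < π²/6`. -/
theorem windowed_weight_sum_max (N : ℕ) (hN : 0 < N) :
    (∀ i ≤ N, ∑ k ∈ Finset.Icc i (i + N), ((wt N k)⁻¹) ^ 2 ≤
      ∑ k ∈ Finset.Icc 0 (0 + N), ((wt N k)⁻¹) ^ 2) ∧
    (∑ k ∈ Finset.Icc N (N + N), ((wt N k)⁻¹) ^ 2 =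
      ∑ k ∈ Finset.Icc 0 (0 + N), ((wt N k)⁻¹) ^ 2) ∧
    Cw N = ∑ j ∈ Finset.Icc 1 (N + 1), (1 : ℝ) / (j : ℝ) ^ 2 ∧
    Cw N < Real.pi ^ 2 / 6 := by
  have eqN : ∑ k ∈ Finset.Icc N (N + N), ((wt N k)⁻¹) ^ 2 =
      ∑ k ∈ Finset.Icc 0 (0 + N), ((wt N k)⁻¹) ^ 2 := by
    rw [window_eq, window_eq]
    simp only [Nat.zero_add]
    rw [← Finset.sum_range_reflect (fun k => ((wt N (N + k))⁻¹) ^ 2) (N + 1)]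
    refine Finset.sum_congr rfl fun k hk => ?_
    rw [Finset.mem_range] at hk
    have e1 : N + (N + 1 - 1 - k) = 2 * N - k := by omega
    simp only [e1]
    congr 2
    rw [wt_right (by omega), wt_left (by omega), Nat.cast_sub (by omega)]
    push_cast
    ring
  have eq0 : ∑ k ∈ Finset.Icc 0 (0 + N), ((wt N k)⁻¹) ^ 2 =
      ∑ j ∈ Finset.Icc 1 (N + 1), (1 : ℝ) / (j : ℝ) ^ 2 := by
    rw [window_eq]
    rw [← Finset.Ico_add_one_right_eq_Icc, Finset.sum_Ico_eq_sum_range]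
    have h : N + 1 + 1 - 1 = N + 1 := by omega
    rw [h]
    refine Finset.sum_congr rfl fun k hk => ?_
    rw [Finset.mem_range] at hk
    rw [Nat.zero_add, wt_left (by omega)]
    rw [one_div, ← inv_pow]
    push_cast
    ring_nf
  have hCw : Cw N = ∑ k ∈ Finset.Icc 0 (0 + N), ((wt N k)⁻¹) ^ 2 := by
    unfold Cw
    refine le_antisymm ?_ ?_
    · exact Finset.sup'_le _ _ fun i hi =>
        window_le N (by rw [Finset.mem_range] at hi; omega)
    · exact Finset.le_sup' (fun i => ∑ k ∈ Finset.Icc i (i + N), ((wt N k)⁻¹) ^ 2)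
        (Finset.mem_range.2 (Nat.succ_pos N))
  refine ⟨fun i hi => window_le N hi, eqN, hCw.trans eq0, ?_⟩
  rw [hCw, eq0]
  have hsum := hasSum_zeta_two
  have hle : ∑ j ∈ Finset.Icc 1 (N + 2), (1 : ℝ) / (j : ℝ) ^ 2 ≤ Real.pi ^ 2 / 6 :=
    _root_.sum_le_hasSum (Finset.Icc 1 (N+2)) (fun i _ => by positivity) hsum
  have hsplit : ∑ j ∈ Finset.Icc 1 (N + 2), (1 : ℝ) / (j : ℝ) ^ 2
      = ∑ j ∈ Finset.Icc 1 (N + 1), (1 : ℝ) / (j : ℝ) ^ 2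
        + 1 / ((N : ℝ) + 2) ^ 2 := by
    rw [← Finset.Ico_add_one_right_eq_Icc, Finset.sum_Ico_succ_top (by omega)]
    rw [show N + 2 = N + 1 + 1 from rfl, Finset.Ico_add_one_right_eq_Icc]
    push_cast
    ring_nf
  have hpos : (0 : ℝ) < 1 / ((N : ℝ) + 2) ^ 2 := by positivity
  linarith
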